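/- Let f be a continuous function on a complete lattice, g a monotone function, and c a closure. If f∘g ≤ c∘f pointwise, then f∘g* ≤ c∘f, where g* is the least closure above g. -/
import Mathlib


def IsClosure {L : Type*} [CompleteLattice L] (c : L → L) : Prop :=
  Monotone c ∧ (∀ x, x ≤ c x) ∧ (∀ x, c (c x) ≤ c x)

def IsLeastClosureAbove {L : Type*} [CompleteLattice L] (k c : L → L) : Prop :=
  IsClosure c ∧ (∀ x, k x ≤ c x) ∧
    ∀ d, IsClosure d → (∀ x, k x ≤ d x) → ∀ x, c x ≤ d x

/-- If f is continuous, g monotone, c a closure and f∘g ≤ c∘f, then f∘g* ≤ c∘f. -/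
theorem stmt3 {L : Type*} [CompleteLattice L] (f g gs c : L → L)
    (hfcont : ∀ S : Set L, f (sSup S) = ⨆ x ∈ S, f x)
    (hg : Monotone g) (hc : IsClosure c)
    (hgs : IsLeastClosureAbove g gs)
    (hyp : ∀ x, f (g x) ≤ c (f x)) :
    ∀ x, f (gs x) ≤ c (f x) := by
  obtain ⟨hcm, hci, hcid⟩ := hc
  have hsup : ∀ a b : L, f (a ⊔ b) = f a ⊔ f b := by
    intro a b
    have h := hfcont {a, b}
    rw [← sSup_pair, h, iSup_pair]
  have hfmono : Monotone f := by
    intro a b hab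
    have : f b = f a ⊔ f b := by
      rw [← hsup, sup_eq_right.mpr hab]
    rw [this]; exact le_sup_left
  set d : L → L := fun x => sSup {y | x ≤ y ∧ f y ≤ c (f x)} with hd
  have hfd : ∀ x, f (d x) ≤ c (f x) := by
    intro x
    rw [hd, hfcont]
    exact iSup₂_le fun y hy => hy.2
  have hxd : ∀ x, x ≤ d x := fun x => le_sSup ⟨le_rfl, hci (f x)⟩
  have hdm : Monotone d := by
    intro x x' h
    refine sSup_le fun y hy => ?_
    have hmem : y ⊔ x' ∈ {z | x' ≤ z ∧ f z ≤ c (f x')} := by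
      refine ⟨le_sup_right, ?_⟩
      rw [hsup]
      exact sup_le (hy.2.trans (hcm (hfmono h))) (hci _)
    exact le_sup_left.trans (le_sSup hmem)
  have hdd : ∀ x, d (d x) ≤ d x := by
    intro x
    refine sSup_le fun y hy => le_sSup ⟨(hxd x).trans hy.1, ?_⟩
    exact hy.2.trans ((hcm (hfd x)).trans (hcid _))
  have hgd : ∀ x, g x ≤ d x := by
    intro x
    refine le_sup_right.trans (le_sSup ⟨le_sup_left, ?_⟩)
    rw [hsup]
    exact sup_le (hci _) (hyp x)
  intro x
  exact (hfmono (hgs.2.2 d ⟨hdm, hxd, hdd⟩ hgd x)).trans (hfd x)
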